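/- arXiv:2504.17605 — 2 statements merged into one kernel-verified Lean document; each statement's English description precedes it below -/
import Mathlib

section
/- Let M be a row stochastic n×n matrix with entries in [0,1] that is strongly connected (its associated directed graph, with an edge j→i whenever M_{i,j} > 0, is strongly connected) and aperiodic (the gcd of cycle lengths in this graph is 1). Then lim_{t→∞} M^t exists and all its rows are equal. Consequently, for any initial opinion vector B, the DeGroot dynamics B^{t+1} = MB^t converges to a consensus: all entries of lim_{t→∞} M^t B are equal. -/
open Matrix Filter

/-- The directed influence graph of `M` (edge `j → i` iff `M i j > 0`) is strongly
connected: for all `i, j` there is a walk from `j` to `i`, i.e. some power of `M`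
has a positive `(i,j)` entry. -/
def StronglyConnected {n : ℕ} (M : Matrix (Fin n) (Fin n) ℝ) : Prop :=
  ∀ i j : Fin n, ∃ k : ℕ, 0 < (M ^ k) i j

/-- `M` is aperiodic: the gcd of the lengths of the cycles of its directed graph
is `1` (a closed walk of length `k` at `i` exists iff `(M^k) i i > 0`). -/
def Aperiodic {n : ℕ} (M : Matrix (Fin n) (Fin n) ℝ) : Prop :=
  ∀ d : ℕ, (∀ k : ℕ, 0 < k → (∃ i : Fin n, 0 < (M ^ k) i i) → d ∣ k) → d = 1

namespace DeGrootAux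

variable {n : ℕ} {M : Matrix (Fin n) (Fin n) ℝ}

lemma pow_nn (h0 : ∀ i j, 0 ≤ M i j) : ∀ t i j, 0 ≤ (M ^ t) i j := by
  intro t
  induction t with
  | zero =>
    intro i j
    rw [pow_zero, Matrix.one_apply]
    split <;> norm_num
  | succ t ih =>
    intro i j
    rw [pow_succ, Matrix.mul_apply]
    exact Finset.sum_nonneg fun k _ => mul_nonneg (ih i k) (h0 k j)

lemma pow_rowsum (h1 : ∀ i, ∑ j, M i j = 1) : ∀ t i, ∑ j, (M ^ t) i j = 1 := by
  intro t
  induction t with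
  | zero => intro i; simp [Matrix.one_apply]
  | succ t ih =>
    intro i
    simp only [pow_succ, Matrix.mul_apply]
    rw [Finset.sum_comm]
    calc ∑ k, ∑ j, (M ^ t) i k * M k j
        = ∑ k, (M ^ t) i k * ∑ j, M k j := by
          simp [Finset.mul_sum]
      _ = 1 := by simp [h1, ih i]

lemma chain (h0 : ∀ t i j, 0 ≤ (M ^ t) i j) (a b : ℕ) (i k j : Fin n) :
    (M ^ a) i k * (M ^ b) k j ≤ (M ^ (a + b)) i j := by
  rw [pow_add, Matrix.mul_apply]
  exact Finset.single_le_sum (fun k' _ => mul_nonneg (h0 a i k') (h0 b k' j))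
    (Finset.mem_univ k)

lemma eventually_return (hn : 2 ≤ n) (h0 : ∀ t i j, 0 ≤ (M ^ t) i j)
    (hconn : StronglyConnected M) (haper : Aperiodic M) (i0 : Fin n) :
    ∃ N : ℕ, ∀ s, N ≤ s → 0 < (M ^ s) i0 i0 := by
  set S : Set ℕ := {k | 0 < k ∧ 0 < (M ^ k) i0 i0} with hS
  have hadd : ∀ a ∈ S, ∀ b ∈ S, a + b ∈ S := by
    rintro a ⟨ha0, ha⟩ b ⟨hb0, hb⟩
    exact ⟨by omega, lt_of_lt_of_le (mul_pos ha hb) (chain h0 a b i0 i0 i0)⟩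
  have hsmul : ∀ c : ℕ, 0 < c → ∀ s ∈ S, c * s ∈ S := by
    intro c hc
    induction c with
    | zero => omega
    | succ c ih =>
      intro s hs
      rcases Nat.eq_zero_or_pos c with hc0 | hc0
      · simpa [hc0] using hs
      · have := hadd _ (ih hc0 s hs) _ hs
        simpa [Nat.succ_mul] using this
  -- any common divisor of S is 1
  have hdvd : ∀ d : ℕ, (∀ s ∈ S, d ∣ s) → d = 1 := by
    intro d hd
    apply haper d
    rintro k hk ⟨i, hi⟩
    obtain ⟨a, ha⟩ := hconn i0 i
    obtain ⟨b, hb⟩ := hconn i i0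
    rcases Nat.eq_zero_or_pos (a + b) with h | h
    · have ha0 : a = 0 := by omega
      have : (0:ℝ) < (M ^ 0) i0 i := by rw [← ha0]; exact ha
      rw [pow_zero, Matrix.one_apply] at this
      have hii : i0 = i := by by_contra hne; simp [hne] at this
      exact hd k ⟨hk, by rw [hii]; exact hi⟩
    · have hab : a + b ∈ S := by
        refine ⟨h, lt_of_lt_of_le (mul_pos ha hb) (chain h0 a b i0 i i0)⟩
      have habk : a + k + b ∈ S := by
        refine ⟨by omega, ?_⟩
        have h1 : (0:ℝ) < (M ^ (k + b)) i i0 :=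
          lt_of_lt_of_le (mul_pos hi hb) (chain h0 k b i i i0)
        have h2 : (0:ℝ) < (M ^ (a + (k + b))) i0 i0 :=
          lt_of_lt_of_le (mul_pos ha h1) (chain h0 a (k + b) i0 i i0)
        have : a + k + b = a + (k + b) := by omega
        rw [this]; exact h2
      have d1 := hd _ hab
      have d2 := hd _ habk
      have : a + k + b = (a + b) + k := by omega
      rw [this] at d2
      exact (Nat.dvd_add_right d1).mp d2
  -- S is nonempty
  have hne : ∃ s, s ∈ S := by
    have hj : ∃ j : Fin n, j ≠ i0 := by
      by_cases h : i0 = (⟨0, by omega⟩ : Fin n)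
      · exact ⟨⟨1, by omega⟩, by rw [h]; intro hc; simpa using congrArg Fin.val hc⟩
      · exact ⟨⟨0, by omega⟩, fun hc => h (hc ▸ rfl)⟩
    obtain ⟨j, hj⟩ := hj
    obtain ⟨a, ha⟩ := hconn i0 j
    obtain ⟨b, hb⟩ := hconn j i0
    refine ⟨a + b, ?_, lt_of_lt_of_le (mul_pos ha hb) (chain h0 a b i0 j i0)⟩
    rcases Nat.eq_zero_or_pos (a + b) with h | h
    · exfalso
      have ha0 : a = 0 := by omega
      rw [ha0, pow_zero, Matrix.one_apply] at ha
      have : i0 ≠ j := fun hc => hj hc.symm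
      simp [this] at ha
    · exact h
  -- the subgroup of ℤ generated by S is all of ℤ
  obtain ⟨s0, hs0⟩ := hne
  set H : AddSubgroup ℤ := AddSubgroup.closure ((fun s : ℕ => (s : ℤ)) '' S) with hH
  obtain ⟨g, hg⟩ := Int.subgroup_cyclic H
  have hmemH : ∀ s ∈ S, (s : ℤ) ∈ H := fun s hs =>
    AddSubgroup.subset_closure ⟨s, hs, rfl⟩
  have hgdvd : ∀ s ∈ S, g.natAbs ∣ s := by
    intro s hs
    have := hmemH s hs
    rw [hg, AddSubgroup.mem_closure_singleton] at this
    obtain ⟨c, hc⟩ := this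
    have : g ∣ (s : ℤ) := ⟨c, by rw [← hc, zsmul_eq_mul]; push_cast; ring⟩
    exact Int.ofNat_dvd.mp ((Int.natAbs_dvd).mpr this)
  have hg1 : g.natAbs = 1 := hdvd _ hgdvd
  have h1H : (1 : ℤ) ∈ H := by
    rcases Int.natAbs_eq_iff.mp hg1 with h | h
    · have hg' : g = 1 := by exact_mod_cast h
      rw [hg, AddSubgroup.mem_closure_singleton]
      exact ⟨1, by rw [hg', one_smul]⟩
    · have hg' : g = -1 := by exact_mod_cast h
      rw [hg, AddSubgroup.mem_closure_singleton]
      exact ⟨-1, by rw [hg', neg_smul, one_smul, neg_neg]⟩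
  -- every element of H is a difference of elements of S ∪ {0}
  have hrep : ∀ x ∈ H, ∃ p q : ℕ, (p = 0 ∨ p ∈ S) ∧ (q = 0 ∨ q ∈ S) ∧ x = (p : ℤ) - q := by
    intro x hx
    rw [hH] at hx
    induction hx using AddSubgroup.closure_induction with
    | mem x hx =>
      obtain ⟨s, hs, rfl⟩ := hx
      exact ⟨s, 0, Or.inr hs, Or.inl rfl, by simp⟩
    | zero => exact ⟨0, 0, Or.inl rfl, Or.inl rfl, by simp⟩
    | add x y hx hy ihx ihy =>
      obtain ⟨p1, q1, hp1, hq1, rfl⟩ := ihx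
      obtain ⟨p2, q2, hp2, hq2, rfl⟩ := ihy
      refine ⟨p1 + p2, q1 + q2, ?_, ?_, by push_cast; ring⟩
      · rcases hp1 with h | h
        · rcases hp2 with h' | h'
          · exact Or.inl (by omega)
          · exact Or.inr (by simpa [h] using h')
        · rcases hp2 with h' | h'
          · exact Or.inr (by simpa [h'] using h)
          · exact Or.inr (hadd _ h _ h')
      · rcases hq1 with h | h
        · rcases hq2 with h' | h'
          · exact Or.inl (by omega)
          · exact Or.inr (by simpa [h] using h')
        · rcases hq2 with h' | h'
          · exact Or.inr (by simpa [h'] using h)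
          · exact Or.inr (hadd _ h _ h')
    | neg x hx ih =>
      obtain ⟨p, q, hp, hq, rfl⟩ := ih
      exact ⟨q, p, hq, hp, by ring⟩
  obtain ⟨p, q, hp, hq, hpq⟩ := hrep 1 h1H
  have hpq' : p = q + 1 := by omega
  rcases hq with hq0 | hqS
  · -- q = 0, so 1 ∈ S
    have hp1 : p = 1 := by omega
    have h1S : (1 : ℕ) ∈ S := by
      rcases hp with h | h
      · omega
      · rwa [hp1] at h
    refine ⟨1, fun s hs => ?_⟩
    have hs1 : s * 1 ∈ S := hsmul s (by omega) 1 h1S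
    rw [Nat.mul_one] at hs1
    exact hs1.2
  · -- q ∈ S, p = q + 1 ∈ S, gcd trick
    have hq0 : 0 < q := hqS.1
    have hpS : p ∈ S := by
      rcases hp with h | h
      · omega
      · exact h
    refine ⟨q * q, fun s hs => ?_⟩
    have hsS : s ∈ S := by
      set r := s % q with hr
      set t := s / q with ht
      have hrq : r < q := Nat.mod_lt _ hq0
      have hqt : q ≤ t := (Nat.le_div_iff_mul_le hq0).mpr hs
      have hrt : r ≤ t := by omega
      obtain ⟨u, hu⟩ : ∃ u, t = u + r := ⟨t - r, by omega⟩
      have hsval : s = r * p + u * q := by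
        have h1 : q * t + r = s := Nat.div_add_mod s q
        rw [hpq', hu] at *
        nlinarith [h1]
      rcases Nat.eq_zero_or_pos r with hr0 | hr0
      · have hu0 : 0 < u := by omega
        have : u * q ∈ S := hsmul u hu0 q hqS
        rwa [hsval, hr0, Nat.zero_mul, Nat.zero_add]
      · rcases Nat.eq_zero_or_pos u with hu0 | hu0
        · have : r * p ∈ S := hsmul r hr0 p hpS
          rwa [hsval, hu0, Nat.zero_mul, Nat.add_zero]
        · have h1 : r * p ∈ S := hsmul r hr0 p hpS
          have h2 : u * q ∈ S := hsmul u hu0 q hqS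
          rw [hsval]; exact hadd _ h1 _ h2
    exact hsS.2

lemma exists_pos_pow (hn : 2 ≤ n) (h0 : ∀ t i j, 0 ≤ (M ^ t) i j)
    (hconn : StronglyConnected M) (haper : Aperiodic M) :
    ∃ m : ℕ, 0 < m ∧ ∀ i j, 0 < (M ^ m) i j := by
  haveI : NeZero n := ⟨by omega⟩
  choose K hK using fun p : Fin n × Fin n => hconn p.1 p.2
  choose N hN using fun j : Fin n => eventually_return hn h0 hconn haper j
  set m := (Finset.univ.sup fun p : Fin n × Fin n => K p) + Finset.univ.sup N + 1 with hm
  refine ⟨m, by omega, fun i j => ?_⟩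
  have hKle : K (i, j) ≤ Finset.univ.sup fun p : Fin n × Fin n => K p :=
    Finset.le_sup (Finset.mem_univ (i, j))
  have hNle : N j ≤ Finset.univ.sup N := Finset.le_sup (Finset.mem_univ j)
  set s := m - K (i, j) with hs
  have hmeq : m = K (i, j) + s := by omega
  have hsN : N j ≤ s := by omega
  have h1 : 0 < (M ^ s) j j := hN j s hsN
  calc (0:ℝ) < (M ^ K (i, j)) i j * (M ^ s) j j := mul_pos (hK (i, j)) h1
    _ ≤ (M ^ (K (i, j) + s)) i j := chain h0 _ _ i j j
    _ = (M ^ m) i j := by rw [← hmeq]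

end DeGrootAux

/-- DeGroot consensus theorem: a row-stochastic, strongly connected, aperiodic
matrix has a limit `L = lim M^t` all whose rows are equal; hence the DeGroot
dynamics `B^{t+1} = M B^t` converges to a consensus for every initial opinion. -/
theorem degroot_consensus {n : ℕ}
    (M : Matrix (Fin n) (Fin n) ℝ)
    (hrange : ∀ i j, M i j ∈ Set.Icc (0 : ℝ) 1)
    (hstoch : ∀ i, ∑ j, M i j = 1)
    (hconn : StronglyConnected M)
    (haper : Aperiodic M) :
    ∃ L : Matrix (Fin n) (Fin n) ℝ,
      Tendsto (fun t : ℕ => M ^ t) atTop (nhds L) ∧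
      (∀ i i' j, L i j = L i' j) ∧
      ∀ B : Fin n → ℝ, ∀ i i', L.mulVec B i = L.mulVec B i' := by

  rcases Nat.lt_or_ge n 2 with hn | hn
  · -- degenerate cases n = 0, 1
    interval_cases n
    · refine ⟨1, ?_, ?_, ?_⟩
      · have h : ∀ t : ℕ, M ^ t = 1 := by
          intro t; ext i j; exact i.elim0
        simp only [h]; exact tendsto_const_nhds
      · intro i; exact i.elim0
      · intro B i; exact i.elim0
    · have hM : M = 1 := by
        ext i j
        fin_cases i; fin_cases j
        have h := hstoch 0
        rw [Fin.sum_univ_one] at h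
        simpa [Matrix.one_apply] using h
      refine ⟨1, ?_, ?_, ?_⟩
      · simp only [hM, one_pow]; exact tendsto_const_nhds
      · intro i i' j
        have : i = i' := Subsingleton.elim i i'
        rw [this]
      · intro B i i'
        have : i = i' := Subsingleton.elim i i'
        rw [this]
  · -- main case
    haveI : NeZero n := ⟨by omega⟩
    have h0 : ∀ i j, 0 ≤ M i j := fun i j => (hrange i j).1
    have hpnn : ∀ t i j, 0 ≤ (M ^ t) i j := DeGrootAux.pow_nn h0
    have hprow : ∀ t i, ∑ j, (M ^ t) i j = 1 := DeGrootAux.pow_rowsum hstoch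
    have hent1 : ∀ t i j, (M ^ t) i j ≤ 1 := by
      intro t i j
      calc (M ^ t) i j ≤ ∑ j', (M ^ t) i j' :=
            Finset.single_le_sum (fun k _ => hpnn t i k) (Finset.mem_univ j)
        _ = 1 := hprow t i
    obtain ⟨m, hm0, hmpos⟩ := DeGrootAux.exists_pos_pow hn hpnn hconn haper
    have hu : (Finset.univ : Finset (Fin n)).Nonempty := Finset.univ_nonempty
    have hup : (Finset.univ : Finset (Fin n × Fin n)).Nonempty := Finset.univ_nonempty
    set ε := Finset.univ.inf' hup (fun p : Fin n × Fin n => (M ^ m) p.1 p.2) with hε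
    have hε0 : 0 < ε := by
      rw [hε, Finset.lt_inf'_iff]
      exact fun p _ => hmpos p.1 p.2
    have hεle : ∀ i k, ε ≤ (M ^ m) i k := fun i k =>
      Finset.inf'_le _ (Finset.mem_univ (i, k))
    have hε2 : 2 * ε ≤ 1 := by
      have hne : (⟨0, by omega⟩ : Fin n) ≠ ⟨1, by omega⟩ := by
        intro h; simpa using congrArg Fin.val h
      have h1 : (M ^ m) ⟨0, by omega⟩ ⟨0, by omega⟩ + (M ^ m) ⟨0, by omega⟩ ⟨1, by omega⟩
          ≤ ∑ j, (M ^ m) ⟨0, by omega⟩ j := by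
        rw [← Finset.sum_pair hne]
        exact Finset.sum_le_sum_of_subset_of_nonneg (Finset.subset_univ _)
          (fun k _ _ => hpnn m _ k)
      rw [hprow m] at h1
      have h2 := hεle (⟨0, by omega⟩ : Fin n) (⟨0, by omega⟩ : Fin n)
      have h3 := hεle (⟨0, by omega⟩ : Fin n) (⟨1, by omega⟩ : Fin n)
      linarith
    -- column max / min
    set A : ℕ → Fin n → ℝ := fun t j => Finset.univ.sup' hu (fun i => (M ^ t) i j) with hA
    set Bc : ℕ → Fin n → ℝ := fun t j => Finset.univ.inf' hu (fun i => (M ^ t) i j) with hBc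
    have hBle : ∀ t i j, Bc t j ≤ (M ^ t) i j := by
      intro t i j
      show Finset.univ.inf' hu (fun i => (M ^ t) i j) ≤ (M ^ t) i j
      exact Finset.inf'_le (fun i => (M ^ t) i j) (Finset.mem_univ i)
    have hleA : ∀ t i j, (M ^ t) i j ≤ A t j := by
      intro t i j
      show (M ^ t) i j ≤ Finset.univ.sup' hu (fun i => (M ^ t) i j)
      exact Finset.le_sup' (fun i => (M ^ t) i j) (Finset.mem_univ i)
    have hBA : ∀ t j, Bc t j ≤ A t j := fun t j =>
      le_trans (hBle t ⟨0, by omega⟩ j) (hleA t ⟨0, by omega⟩ j)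
    have hBnn : ∀ t j, 0 ≤ Bc t j := by
      intro t j
      exact Finset.le_inf' hu _ (fun i _ => hpnn t i j)
    have hA1 : ∀ t j, A t j ≤ 1 := by
      intro t j
      exact Finset.sup'_le hu _ (fun i _ => hent1 t i j)
    -- expansion of entries of M^(s+t)
    have hexp : ∀ s t i j, (M ^ (s + t)) i j = ∑ k, (M ^ s) i k * (M ^ t) k j := by
      intro s t i j
      rw [pow_add, Matrix.mul_apply]
    -- monotonicity
    have hAanti : ∀ j, Antitone fun t => A t j := by
      intro j
      apply antitone_nat_of_succ_le
      intro t
      show Finset.univ.sup' hu (fun i => (M ^ (t + 1)) i j) ≤ A t j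
      apply Finset.sup'_le
      intro i _
      have : (M ^ (t + 1)) i j = ∑ k, M i k * (M ^ t) k j := by
        rw [add_comm, hexp 1 t i j]; simp
      rw [this]
      calc ∑ k, M i k * (M ^ t) k j ≤ ∑ k, M i k * A t j :=
            Finset.sum_le_sum fun k _ =>
              mul_le_mul_of_nonneg_left (hleA t k j) (h0 i k)
        _ = A t j := by rw [← Finset.sum_mul, hstoch i, one_mul]
    have hBmono : ∀ j, Monotone fun t => Bc t j := by
      intro j
      apply monotone_nat_of_le_succ
      intro t
      show Bc t j ≤ Finset.univ.inf' hu (fun i => (M ^ (t + 1)) i j)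
      apply Finset.le_inf'
      intro i _
      have : (M ^ (t + 1)) i j = ∑ k, M i k * (M ^ t) k j := by
        rw [add_comm, hexp 1 t i j]; simp
      rw [this]
      calc Bc t j = ∑ k, M i k * Bc t j := by rw [← Finset.sum_mul, hstoch i, one_mul]
        _ ≤ ∑ k, M i k * (M ^ t) k j :=
            Finset.sum_le_sum fun k _ =>
              mul_le_mul_of_nonneg_left (hBle t k j) (h0 i k)
    -- contraction
    have hcontrA : ∀ t j, A (m + t) j ≤ A t j - ε * (A t j - Bc t j) := by
      intro t j
      show Finset.univ.sup' hu (fun i => (M ^ (m + t)) i j) ≤ A t j - ε * (A t j - Bc t j)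
      apply Finset.sup'_le
      intro i _
      obtain ⟨k0, -, hk0⟩ := Finset.exists_mem_eq_inf' hu (fun i => (M ^ t) i j)
      have hk0' : Bc t j = (M ^ t) k0 j := hk0
      have key : ε * (A t j - Bc t j) ≤ A t j - (M ^ (m + t)) i j := by
        have hsum : A t j - (M ^ (m + t)) i j
            = ∑ k, (M ^ m) i k * (A t j - (M ^ t) k j) := by
          rw [hexp m t i j]
          have : ∑ k, (M ^ m) i k * (A t j - (M ^ t) k j)
              = (∑ k, (M ^ m) i k) * A t j - ∑ k, (M ^ m) i k * (M ^ t) k j := by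
            rw [Finset.sum_mul, ← Finset.sum_sub_distrib]
            congr 1; ext k; ring
          rw [this, hprow m i, one_mul]
        rw [hsum]
        calc ε * (A t j - Bc t j) ≤ (M ^ m) i k0 * (A t j - (M ^ t) k0 j) := by
              rw [hk0']
              exact mul_le_mul (hεle i k0) le_rfl (by linarith [hleA t k0 j]) (hpnn m i k0)
          _ ≤ ∑ k, (M ^ m) i k * (A t j - (M ^ t) k j) :=
              Finset.single_le_sum (f := fun k => (M ^ m) i k * (A t j - (M ^ t) k j))
                (fun k _ => mul_nonneg (hpnn m i k) (by linarith [hleA t k j]))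
                (Finset.mem_univ k0)
      linarith
    have hcontrB : ∀ t j, Bc t j + ε * (A t j - Bc t j) ≤ Bc (m + t) j := by
      intro t j
      show Bc t j + ε * (A t j - Bc t j) ≤ Finset.univ.inf' hu (fun i => (M ^ (m + t)) i j)
      apply Finset.le_inf'
      intro i _
      obtain ⟨k0, -, hk0⟩ := Finset.exists_mem_eq_sup' hu (fun i => (M ^ t) i j)
      have hk0' : A t j = (M ^ t) k0 j := hk0
      have key : ε * (A t j - Bc t j) ≤ (M ^ (m + t)) i j - Bc t j := by
        have hsum : (M ^ (m + t)) i j - Bc t j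
            = ∑ k, (M ^ m) i k * ((M ^ t) k j - Bc t j) := by
          rw [hexp m t i j]
          have : ∑ k, (M ^ m) i k * ((M ^ t) k j - Bc t j)
              = ∑ k, (M ^ m) i k * (M ^ t) k j - (∑ k, (M ^ m) i k) * Bc t j := by
            rw [Finset.sum_mul, ← Finset.sum_sub_distrib]
            congr 1; ext k; ring
          rw [this, hprow m i, one_mul]
        rw [hsum]
        calc ε * (A t j - Bc t j) ≤ (M ^ m) i k0 * ((M ^ t) k0 j - Bc t j) := by
              rw [hk0']
              exact mul_le_mul (hεle i k0) le_rfl (by linarith [hBle t k0 j]) (hpnn m i k0)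
          _ ≤ ∑ k, (M ^ m) i k * ((M ^ t) k j - Bc t j) :=
              Finset.single_le_sum (f := fun k => (M ^ m) i k * ((M ^ t) k j - Bc t j))
                (fun k _ => mul_nonneg (hpnn m i k) (by linarith [hBle t k j]))
                (Finset.mem_univ k0)
      linarith
    have hD : ∀ t j, A (m + t) j - Bc (m + t) j ≤ (1 - 2 * ε) * (A t j - Bc t j) := by
      intro t j
      have h1 := hcontrA t j
      have h2 := hcontrB t j
      nlinarith [hBA t j]
    -- geometric decay along multiples of m
    have hgeo : ∀ q j, A (q * m) j - Bc (q * m) j ≤ (1 - 2 * ε) ^ q := by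
      intro q j
      induction q with
      | zero => simpa using by linarith [hA1 0 j, hBnn 0 j]
      | succ q ih =>
        have heq : (q + 1) * m = m + q * m := by ring
        rw [heq]
        calc A (m + q * m) j - Bc (m + q * m) j
            ≤ (1 - 2 * ε) * (A (q * m) j - Bc (q * m) j) := hD (q * m) j
          _ ≤ (1 - 2 * ε) * (1 - 2 * ε) ^ q :=
              mul_le_mul_of_nonneg_left ih (by linarith)
          _ = (1 - 2 * ε) ^ (q + 1) := by rw [pow_succ]; ring
    have hDanti : ∀ j, Antitone fun t => A t j - Bc t j := fun j a b hab =>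
      sub_le_sub (hAanti j hab) (hBmono j hab)
    -- D → 0
    have hDto0 : ∀ j, Tendsto (fun t => A t j - Bc t j) atTop (nhds 0) := by
      intro j
      apply squeeze_zero (fun t => by linarith [hBA t j])
        (g := fun t => (1 - 2 * ε) ^ (t / m))
      · intro t
        calc A t j - Bc t j ≤ A (t / m * m) j - Bc (t / m * m) j :=
              hDanti j (Nat.div_mul_le_self t m)
          _ ≤ (1 - 2 * ε) ^ (t / m) := hgeo (t / m) j
      · have hdiv : Tendsto (fun t : ℕ => t / m) atTop atTop :=
          tendsto_atTop_atTop.2 fun b =>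
            ⟨b * m, fun t ht => (Nat.le_div_iff_mul_le hm0).mpr ht⟩
        exact (tendsto_pow_atTop_nhds_zero_of_lt_one (by linarith) (by linarith)).comp hdiv
    -- A converges
    set ℓ : Fin n → ℝ := fun j => ⨅ t, A t j with hℓ
    have hAtend : ∀ j, Tendsto (fun t => A t j) atTop (nhds (ℓ j)) := by
      intro j
      exact tendsto_atTop_ciInf (hAanti j)
        ⟨0, by rintro x ⟨t, rfl⟩; exact le_trans (hBnn t j) (hBA t j)⟩
    have hBtend : ∀ j, Tendsto (fun t => Bc t j) atTop (nhds (ℓ j)) := by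
      intro j
      have h := (hAtend j).sub (hDto0 j)
      simpa using h
    have hEnt : ∀ i j, Tendsto (fun t => (M ^ t) i j) atTop (nhds (ℓ j)) := by
      intro i j
      exact tendsto_of_tendsto_of_tendsto_of_le_of_le (hBtend j) (hAtend j)
        (fun t => hBle t i j) (fun t => hleA t i j)
    refine ⟨Matrix.of fun _ j => ℓ j, ?_, fun i i' j => rfl, fun B i i' => rfl⟩
    refine tendsto_pi_nhds.2 ?_
    intro i
    rw [tendsto_pi_nhds]
    intro j
    exact hEnt i j
end

section
/- Consider a constraint opinion model over ℝ≥0 with one variable p of finite domain D and an influence matrix M of (possibly non-constant) constraints. If for every d ∈ D the real matrix M{p↦d} obtained by evaluating each entry of M at the valuation p↦d is row stochastic, strongly connected, and aperiodic, then lim_{t→∞} M^t exists (as a matrix of constraints) and all its rows are equal. -/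
open Matrix Filter


theorem nt_eventually (S : Set ℕ)
    (hadd : ∀ a ∈ S, ∀ b ∈ S, a + b ∈ S)
    (hpos : ∀ s ∈ S, 0 < s)
    (hne : S.Nonempty)
    (hgcd : ∀ e : ℕ, (∀ s ∈ S, e ∣ s) → e = 1) :
    ∃ N, ∀ m, N ≤ m → m ∈ S := by
  have hmul : ∀ a ∈ S, ∀ x : ℕ, 0 < x → x * a ∈ S := by
    intro a ha x hx
    induction x with
    | zero => omega
    | succ x ih =>
      rcases Nat.eq_zero_or_pos x with h | h
      · subst h; simpa using ha
      · rw [Nat.succ_mul]; exact hadd _ (ih h) _ ha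
  have hcomb : ∀ a ∈ S, ∀ b ∈ S, ∀ x y : ℕ, 0 < x + y → x * a + y * b ∈ S := by
    intro a ha b hb x y hxy
    rcases Nat.eq_zero_or_pos x with hx | hx
    · subst hx; simpa using hmul b hb y (by omega)
    rcases Nat.eq_zero_or_pos y with hy | hy
    · subst hy; simpa using hmul a ha x hx
    · exact hadd _ (hmul a ha x hx) _ (hmul b hb y hy)
  set G : Set ℕ := {g | 0 < g ∧ ∃ b ∈ S, ∃ c ∈ S, g = Nat.gcd b c} with hG
  obtain ⟨a, ha⟩ := hne
  have hGne : G.Nonempty := ⟨a, hpos a ha, a, ha, a, ha, (Nat.gcd_self a).symm⟩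
  obtain ⟨hg_pos, b, hb, c, hc, hgbc⟩ : sInf G ∈ G := Nat.sInf_mem hGne
  set g := sInf G with hgdef
  have hdvd : ∀ s ∈ S, g ∣ s := by
    intro s hs
    have hs_pos : 0 < s := hpos s hs
    have hbez : (g : ℤ) = b * Nat.gcdA b c + c * Nat.gcdB b c := by
      rw [hgbc]; exact Nat.gcd_eq_gcd_ab b c
    set u := Nat.gcdA b c with hu
    set v := Nat.gcdB b c with hv
    set x : ℕ := (u % (s : ℤ)).toNat with hxdef
    set y : ℕ := (v % (s : ℤ)).toNat with hydef
    have hsne : (s : ℤ) ≠ 0 := by exact_mod_cast hs_pos.ne'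
    have hx : (x : ℤ) = u % s := Int.toNat_of_nonneg (Int.emod_nonneg u hsne)
    have hy : (y : ℤ) = v % s := Int.toNat_of_nonneg (Int.emod_nonneg v hsne)
    set m : ℕ := x * b + y * c + b * s with hmdef
    have hm : m ∈ S := by
      have hbs : b * s ∈ S := by
        rw [mul_comm]; exact hmul b hb s hs_pos -- s * b? careful
      rcases Nat.eq_zero_or_pos (x + y) with h | h
      · have hx0 : x = 0 := by omega
        have hy0 : y = 0 := by omega
        simpa [hmdef, hx0, hy0] using hbs
      · exact hadd _ (hcomb b hb c hc x y h) _ hbs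
    have hmod : (s : ℤ) ∣ (m : ℤ) - g := by
      refine ⟨b * (-(u / s)) + c * (-(v / s)) + b, ?_⟩
      have : (m : ℤ) = x * b + y * c + b * s := by push_cast [hmdef]; ring
      rw [this, hx, hy, hbez, Int.emod_def, Int.emod_def]; ring
    have h2 : g ≤ Nat.gcd m s := Nat.sInf_le ⟨Nat.gcd_pos_of_pos_right m hs_pos, m, hm, s, hs, rfl⟩
    have h3 : Nat.gcd m s ∣ g := by
      have hd1 : (Nat.gcd m s : ℤ) ∣ (m : ℤ) := Int.natCast_dvd_natCast.mpr (Nat.gcd_dvd_left m s)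
      have hd2 : (Nat.gcd m s : ℤ) ∣ (m : ℤ) - g :=
        (Int.natCast_dvd_natCast.mpr (Nat.gcd_dvd_right m s)).trans hmod
      have : (Nat.gcd m s : ℤ) ∣ (g : ℤ) := by
        have := dvd_sub hd1 hd2; simpa using this
      exact_mod_cast this
    have h4 : Nat.gcd m s = g := le_antisymm (Nat.le_of_dvd hg_pos h3) h2
    exact h4 ▸ Nat.gcd_dvd_right m s
  have hg1 : g = 1 := hgcd g hdvd
  have hcop : Nat.Coprime b c := by rw [Nat.Coprime, ← hgbc, hg1]
  rcases eq_or_ne b 1 with hb1 | hb1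
  · exact ⟨1, fun m hm => by simpa [hb1] using hmul b hb m (by omega)⟩
  rcases eq_or_ne c 1 with hc1 | hc1
  · exact ⟨1, fun m hm => by simpa [hc1] using hmul c hc m (by omega)⟩
  have hb2 : 2 ≤ b := by have := hpos b hb; omega
  have hc2 : 2 ≤ c := by have := hpos c hc; omega
  have hfrob := frobeniusNumber_pair hcop hb2 hc2
  refine ⟨b * c, fun m hm => ?_⟩
  have hlt : b * c - b - c < m := by
    have h5 : b + c ≤ b * c := Nat.add_le_mul hb2 hc2
    omega
  have hmem : m ∈ AddSubmonoid.closure ({b, c} : Set ℕ) := by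
    by_contra hcon
    exact absurd (hfrob.2 hcon) (by omega)
  obtain ⟨p, q, hpq⟩ := (AddSubmonoid.mem_closure_pair b c m).mp hmem
  have hm0 : 0 < m := by
    have : 0 < b * c := by positivity
    omega
  have hpq0 : 0 < p + q := by
    rcases Nat.eq_zero_or_pos (p + q) with h | h
    · exfalso; have hp : p = 0 := by omega
      have hq : q = 0 := by omega
      rw [hp, hq] at hpq; simp at hpq; omega
    · exact h
  have h6 := hcomb b hb c hc p q hpq0
  have h7 : p * b + q * c = m := by simpa [smul_eq_mul] using hpq
  rwa [h7] at h6


theorem aux_consensus {n : ℕ} (hn : 0 < n) (A : Matrix (Fin n) (Fin n) NNReal)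
    (hst : ∀ i, ∑ j, A i j = 1)
    (K : ℕ) (hK : 0 < K) (hposK : ∀ i j, 0 < (A ^ K) i j) :
    ∃ L : Matrix (Fin n) (Fin n) NNReal,
      Tendsto (fun t : ℕ => A ^ t) atTop (nhds L) ∧ ∀ i i' j, L i j = L i' j := by
  haveI : Nonempty (Fin n) := ⟨⟨0, hn⟩⟩
  have hne : (Finset.univ : Finset (Fin n)).Nonempty := Finset.univ_nonempty
  set P : ℕ → Fin n → Fin n → ℝ := fun t i j => ((A ^ t) i j : ℝ) with hPdef
  have hPnn : ∀ t i j, 0 ≤ P t i j := fun t i j => ((A ^ t) i j).coe_nonneg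
  have hstpow : ∀ t i, ∑ j, (A ^ t) i j = 1 := by
    intro t
    induction t with
    | zero => intro i; simp [Matrix.one_apply]
    | succ t ih =>
      intro i
      rw [pow_succ]
      simp only [Matrix.mul_apply]
      rw [Finset.sum_comm]
      simp [← Finset.mul_sum, hst, ih]
  have hPst : ∀ t i, ∑ j, P t i j = 1 := by
    intro t i
    have := hstpow t i
    rw [hPdef]
    beta_reduce
    exact_mod_cast congrArg (fun x : NNReal => (x : ℝ)) this
  have hkey : ∀ s t i j, P (s + t) i j = ∑ l, P s i l * P t l j := by
    intro s t i j
    rw [hPdef]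
    simp only [pow_add, Matrix.mul_apply]
    push_cast
    rfl
  set mi : ℕ → Fin n → ℝ := fun t j => Finset.univ.inf' hne (fun i => P t i j) with hmidef
  set ma : ℕ → Fin n → ℝ := fun t j => Finset.univ.sup' hne (fun i => P t i j) with hmadef
  have hmi_le : ∀ t i j, mi t j ≤ P t i j := fun t i j => Finset.inf'_le _ (Finset.mem_univ i)
  have hle_ma : ∀ t i j, P t i j ≤ ma t j := fun t i j => Finset.le_sup' (fun i => P t i j) (Finset.mem_univ i)
  have hmi_ma : ∀ t j, mi t j ≤ ma t j :=
    fun t j => (hmi_le t (Classical.arbitrary _) j).trans (hle_ma t _ j)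
  have hmi0 : ∀ t j, 0 ≤ mi t j := by
    intro t j
    apply Finset.le_inf'
    intro i _
    exact hPnn t i j
  have hma_mono : ∀ s t j, ma (s + t) j ≤ ma t j := by
    intro s t j
    apply Finset.sup'_le
    intro i _
    rw [hkey]
    calc ∑ l, P s i l * P t l j ≤ ∑ l, P s i l * ma t j :=
          Finset.sum_le_sum fun l _ => mul_le_mul_of_nonneg_left (hle_ma t l j) (hPnn s i l)
      _ = ma t j := by rw [← Finset.sum_mul, hPst s i, one_mul]
  have hmi_mono : ∀ s t j, mi t j ≤ mi (s + t) j := by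
    intro s t j
    apply Finset.le_inf'
    intro i _
    rw [hkey]
    calc mi t j = ∑ l, P s i l * mi t j := by rw [← Finset.sum_mul, hPst s i, one_mul]
      _ ≤ ∑ l, P s i l * P t l j :=
          Finset.sum_le_sum fun l _ => mul_le_mul_of_nonneg_left (hmi_le t l j) (hPnn s i l)
  set ε : ℝ := Finset.univ.inf' hne (fun i => Finset.univ.inf' hne (fun l => P K i l)) with hεdef
  have hε_le : ∀ i l, ε ≤ P K i l := fun i l =>
    le_trans (Finset.inf'_le _ (Finset.mem_univ i)) (Finset.inf'_le _ (Finset.mem_univ l))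
  have hε_pos : 0 < ε := by
    rw [hεdef]
    rw [Finset.lt_inf'_iff]
    intro i _
    rw [Finset.lt_inf'_iff]
    intro l _
    exact_mod_cast hposK i l
  have hε1 : ε ≤ 1 := by
    have i0 : Fin n := Classical.arbitrary _
    calc ε ≤ P K i0 i0 := hε_le i0 i0
      _ ≤ ∑ l, P K i0 l := Finset.single_le_sum (fun l _ => hPnn K i0 l) (Finset.mem_univ i0)
      _ = 1 := hPst K i0
  have hcontr : ∀ t j, ma (K + t) j ≤ ma t j - ε * (ma t j - mi t j) := by
    intro t j
    apply Finset.sup'_le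
    intro i _
    obtain ⟨l0, -, hl0⟩ := Finset.exists_mem_eq_inf' hne (fun l => P t l j)
    rw [hkey]
    have hsum : P K i l0 + ∑ l ∈ Finset.univ.erase l0, P K i l = 1 := by
      rw [Finset.add_sum_erase _ _ (Finset.mem_univ l0)]; exact hPst K i
    have hmil0 : mi t j = P t l0 j := hl0
    have hsplit : ∑ l, P K i l * P t l j
        = P K i l0 * P t l0 j + ∑ l ∈ Finset.univ.erase l0, P K i l * P t l j :=
      (Finset.add_sum_erase _ (fun l => P K i l * P t l j) (Finset.mem_univ l0)).symm
    rw [hsplit]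
    have hb1 : ∑ l ∈ Finset.univ.erase l0, P K i l * P t l j
        ≤ ∑ l ∈ Finset.univ.erase l0, P K i l * ma t j :=
      Finset.sum_le_sum fun l _ => mul_le_mul_of_nonneg_left (hle_ma t l j) (hPnn K i l)
    have hb2 : ∑ l ∈ Finset.univ.erase l0, P K i l = 1 - P K i l0 := by linarith [hsum]
    have hb3 : ∑ l ∈ Finset.univ.erase l0, P K i l * ma t j = (1 - P K i l0) * ma t j := by
      rw [← Finset.sum_mul, hb2]
    rw [← hmil0]
    nlinarith [mul_nonneg (sub_nonneg.2 (hε_le i l0)) (sub_nonneg.2 (hmi_ma t j)), hb1, hb3]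
  -- the gap function
  set gap : ℕ → Fin n → ℝ := fun t j => ma t j - mi t j with hgapdef
  have hgap_nn : ∀ t j, 0 ≤ gap t j := fun t j => sub_nonneg.2 (hmi_ma t j)
  have hgap_contr : ∀ t j, gap (K + t) j ≤ (1 - ε) * gap t j := by
    intro t j
    have h1 := hcontr t j
    have h2 := hmi_mono K t j
    simp only [hgapdef]
    ring_nf
    nlinarith
  have hgap_mono : ∀ s t j, gap (s + t) j ≤ gap t j := by
    intro s t j
    have := hma_mono s t j
    have := hmi_mono s t j
    simp only [hgapdef]
    linarith
  have hgap_pow : ∀ m j, gap (K * m) j ≤ (1 - ε) ^ m * gap 0 j := by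
    intro m j
    induction m with
    | zero => simp
    | succ m ih =>
      have he : K * (m + 1) = K + K * m := by ring
      rw [he]
      calc gap (K + K * m) j ≤ (1 - ε) * gap (K * m) j := hgap_contr _ j
        _ ≤ (1 - ε) * ((1 - ε) ^ m * gap 0 j) :=
            mul_le_mul_of_nonneg_left ih (by linarith)
        _ = (1 - ε) ^ (m + 1) * gap 0 j := by ring
  have hgap_bound : ∀ t j, gap t j ≤ (1 - ε) ^ (t / K) * gap 0 j := by
    intro t j
    have h1 : K * (t / K) ≤ t := Nat.mul_div_le t K
    have h2 : t = (t - K * (t / K)) + K * (t / K) := by omega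
    calc gap t j = gap ((t - K * (t / K)) + K * (t / K)) j := by rw [← h2]
      _ ≤ gap (K * (t / K)) j := hgap_mono _ _ j
      _ ≤ (1 - ε) ^ (t / K) * gap 0 j := hgap_pow _ j
  have hdiv : Tendsto (fun t : ℕ => t / K) atTop atTop := by
    apply tendsto_atTop_atTop.2
    intro b
    refine ⟨b * K, fun a ha => ?_⟩
    exact (Nat.le_div_iff_mul_le hK).2 ha
  have hgap0 : ∀ j, Tendsto (fun t => gap t j) atTop (nhds 0) := by
    intro j
    have hpow : Tendsto (fun m : ℕ => (1 - ε) ^ m * gap 0 j) atTop (nhds 0) := by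
      have := (tendsto_pow_atTop_nhds_zero_of_lt_one (by linarith : (0:ℝ) ≤ 1 - ε)
        (by linarith : (1:ℝ) - ε < 1)).mul_const (gap 0 j)
      simpa using this
    exact squeeze_zero (fun t => hgap_nn t j) (fun t => hgap_bound t j) (hpow.comp hdiv)
  have hlim : ∀ j, ∃ x : ℝ, 0 ≤ x ∧ Tendsto (fun t => mi t j) atTop (nhds x) := by
    intro j
    have hmono : Monotone fun t => mi t j := by
      apply monotone_nat_of_le_succ
      intro t
      have := hmi_mono 1 t j
      simpa [Nat.add_comm] using this
    have hbdd : BddAbove (Set.range fun t => mi t j) := by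
      refine ⟨ma 0 j, ?_⟩
      rintro x ⟨t, rfl⟩
      calc mi t j ≤ ma t j := hmi_ma t j
        _ = ma (t + 0) j := by rw [Nat.add_zero]
        _ ≤ ma 0 j := hma_mono t 0 j
    refine ⟨⨆ t, mi t j, ?_, tendsto_atTop_ciSup hmono hbdd⟩
    exact le_trans (hmi0 0 j) (le_ciSup hbdd 0)
  choose Lr hLr0 hLr using hlim
  have hent : ∀ i j, Tendsto (fun t => P t i j) atTop (nhds (Lr j)) := by
    intro i j
    have hma_t : Tendsto (fun t => ma t j) atTop (nhds (Lr j)) := by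
      have : Tendsto (fun t => mi t j + gap t j) atTop (nhds (Lr j + 0)) :=
        (hLr j).add (hgap0 j)
      simpa [hgapdef] using this
    exact tendsto_of_tendsto_of_tendsto_of_le_of_le (hLr j) hma_t
      (fun t => hmi_le t i j) (fun t => hle_ma t i j)
  refine ⟨fun i j => (Lr j).toNNReal, ?_, fun i i' j => rfl⟩
  apply tendsto_pi_nhds.2
  intro i
  rw [tendsto_pi_nhds]
  intro j
  rw [← NNReal.tendsto_coe]
  have hco : ((Lr j).toNNReal : ℝ) = Lr j := Real.coe_toNNReal _ (hLr0 j)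
  rw [hco]
  exact hent i j


theorem chain_pos {n : ℕ} (A : Matrix (Fin n) (Fin n) NNReal) (a b : ℕ) (i k j : Fin n)
    (h1 : 0 < (A ^ a) i k) (h2 : 0 < (A ^ b) k j) : 0 < (A ^ (a + b)) i j := by
  have : (A ^ (a + b)) i j = ∑ l, (A ^ a) i l * (A ^ b) l j := by
    rw [pow_add, Matrix.mul_apply]
  rw [this]
  calc (0 : NNReal) < (A ^ a) i k * (A ^ b) k j := mul_pos h1 h2
    _ ≤ ∑ l, (A ^ a) i l * (A ^ b) l j :=
        Finset.single_le_sum (f := fun l => (A ^ a) i l * (A ^ b) l j)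
          (fun l _ => zero_le) (Finset.mem_univ k)

theorem primitive_of_conn_aper {n : ℕ} (hn : 0 < n) (A : Matrix (Fin n) (Fin n) NNReal)
    (hst : ∀ i, ∑ j, A i j = 1)
    (hconn : ∀ i j : Fin n, ∃ k : ℕ, 0 < (A ^ k) i j)
    (haper : ∀ e : ℕ,
      (∀ k : ℕ, 0 < k → (∃ i : Fin n, 0 < (A ^ k) i i) → e ∣ k) → e = 1) :
    ∃ K : ℕ, 0 < K ∧ ∀ i j, 0 < (A ^ K) i j := by
  set i0 : Fin n := ⟨0, hn⟩ with hi0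
  set S : Set ℕ := {k | 0 < k ∧ 0 < (A ^ k) i0 i0} with hS
  have hadd : ∀ a ∈ S, ∀ b ∈ S, a + b ∈ S := by
    rintro a ⟨ha1, ha2⟩ b ⟨hb1, hb2⟩
    exact ⟨by omega, chain_pos A a b i0 i0 i0 ha2 hb2⟩
  have hposS : ∀ s ∈ S, 0 < s := fun s hs => hs.1
  have hne : S.Nonempty := by
    have hj : ∃ j, 0 < A i0 j := by
      by_contra h
      push_neg at h
      have h0 : ∀ j, A i0 j = 0 := fun j => le_antisymm (h j) zero_le
      have := hst i0
      simp [h0] at this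
    obtain ⟨j, hj⟩ := hj
    obtain ⟨b, hb⟩ := hconn j i0
    rcases Nat.eq_zero_or_pos b with hb0 | hb0
    · subst hb0
      have hji : j = i0 := by
        by_contra hne'
        rw [pow_zero, Matrix.one_apply_ne hne'] at hb
        exact lt_irrefl _ hb
      refine ⟨1, Nat.one_pos, ?_⟩
      rw [pow_one]
      exact hji ▸ hj
    · refine ⟨1 + b, by omega, chain_pos A 1 b i0 j i0 ?_ hb⟩
      rw [pow_one]; exact hj
  have hgcdS : ∀ e : ℕ, (∀ s ∈ S, e ∣ s) → e = 1 := by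
    intro e he
    apply haper e
    rintro k hk ⟨i, hi⟩
    obtain ⟨a, ha⟩ := hconn i0 i
    obtain ⟨b, hb⟩ := hconn i i0
    have habk : (a + (k + b)) ∈ S :=
      ⟨by omega, chain_pos A a (k + b) i0 i i0 ha (chain_pos A k b i i i0 hi hb)⟩
    rcases Nat.eq_zero_or_pos (a + b) with hab | hab
    · have ha0 : a = 0 := by omega
      have hb0 : b = 0 := by omega
      have : k ∈ S := by
        have : a + (k + b) = k := by omega
        rwa [this] at habk
      exact he k this
    · have habS : (a + b) ∈ S := ⟨hab, chain_pos A a b i0 i i0 ha hb⟩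
      have hd := Nat.dvd_sub (he _ habk) (he _ habS)
      have heq : (a + (k + b)) - (a + b) = k := by omega
      rwa [heq] at hd
  obtain ⟨N, hN⟩ := nt_eventually S hadd hposS hne hgcdS
  obtain ⟨p, hp⟩ := Classical.axiomOfChoice (fun i => hconn i i0)
  obtain ⟨q, hq⟩ := Classical.axiomOfChoice (fun j => hconn i0 j)
  haveI : Nonempty (Fin n) := ⟨i0⟩
  set Pm : ℕ := Finset.univ.sup p with hPm
  set Qm : ℕ := Finset.univ.sup q with hQm
  refine ⟨N + 1 + Pm + Qm, by omega, fun i j => ?_⟩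
  set K := N + 1 + Pm + Qm with hKdef
  have hpi : p i ≤ Pm := Finset.le_sup (Finset.mem_univ i)
  have hqj : q j ≤ Qm := Finset.le_sup (Finset.mem_univ j)
  set m : ℕ := K - p i - q j with hmdef
  have hmN : N ≤ m := by omega
  have hmS : m ∈ S := hN m hmN
  have hKeq : K = p i + (m + q j) := by omega
  rw [hKeq]
  exact chain_pos A (p i) (m + q j) i i0 j (hp i)
    (chain_pos A m (q j) i0 i0 j hmS.2 (hq j))

/-- A constraint opinion model over `ℝ≥0` with one variable `p` of finite domain `D`:
the influence matrix `M` has (possibly non-constant) constraints `D → ℝ≥0` as entries.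
If for every `d ∈ D` the real matrix `M{p↦d}` is row stochastic, strongly connected
and aperiodic, then `lim_{t→∞} M^t` exists (pointwise at every `d`) and all its
rows are equal. -/
theorem constraint_consensus {n : ℕ} {D : Type*} [Fintype D]
    (M : Fin n → Fin n → (D → NNReal))
    (Md : D → Matrix (Fin n) (Fin n) NNReal)
    (hMd : ∀ d i j, Md d i j = M i j d)
    (hstoch : ∀ d i, ∑ j, Md d i j = 1)
    (hconn : ∀ d, ∀ i j : Fin n, ∃ k : ℕ, 0 < (Md d ^ k) i j)
    (haper : ∀ d, ∀ e : ℕ,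
      (∀ k : ℕ, 0 < k → (∃ i : Fin n, 0 < (Md d ^ k) i i) → e ∣ k) → e = 1) :
    ∃ L : D → Matrix (Fin n) (Fin n) NNReal,
      (∀ d, Tendsto (fun t : ℕ => Md d ^ t) atTop (nhds (L d))) ∧
      ∀ d, ∀ i i' j, L d i j = L d i' j := by
  rcases Nat.eq_zero_or_pos n with hn0 | hn
  · subst hn0
    haveI : Subsingleton (Matrix (Fin 0) (Fin 0) NNReal) :=
      ⟨fun a b => funext fun i => i.elim0⟩
    refine ⟨fun _ => 0, fun d => ?_, fun d i => i.elim0⟩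
    have : (fun t : ℕ => Md d ^ t) = fun _ => (0 : Matrix (Fin 0) (Fin 0) NNReal) :=
      funext fun t => Subsingleton.elim _ _
    rw [this]
    exact tendsto_const_nhds
  · have hex : ∀ d, ∃ Ld : Matrix (Fin n) (Fin n) NNReal,
        Tendsto (fun t : ℕ => Md d ^ t) atTop (nhds Ld) ∧ ∀ i i' j, Ld i j = Ld i' j := by
      intro d
      obtain ⟨K, hK, hKpos⟩ :=
        primitive_of_conn_aper hn (Md d) (hstoch d) (hconn d) (haper d)
      exact aux_consensus hn (Md d) (hstoch d) K hK hKpos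
    choose L h1 h2 using hex
    exact ⟨L, h1, h2⟩
end
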